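/- Suppose p_i = 0 almost surely for all i in I_1. For the step-down test with critical values beta_i = i*alpha/(n+1-i*(1-alpha)), the expected number of false rejections satisfies E[V(tau_SD)] <= (alpha/(1-alpha))*(n_1+1) if and only if E[M_{I_0}(sigma)] <= alpha*(n+1)*P(R(tau_SD) = n), where sigma = min{beta_i : p_{i:n} > beta_i} ∧ beta_n. -/

import Mathlib

open MeasureTheory Finset
open scoped Classical

noncomputable section

variable {Ω : Type*}

/-- Number of p-values with index in `I` that are `≤ t` (e.g. false rejections `V`). -/
def Vc {n : ℕ} (p : Fin n → Ω → ℝ) (I : Finset (Fin n)) (t : ℝ) (ω : Ω) : ℕ :=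
  (I.filter fun i => p i ω ≤ t).card

/-- Total number of rejections `R(t)`. -/
def Rc {n : ℕ} (p : Fin n → Ω → ℝ) (t : ℝ) (ω : Ω) : ℕ :=
  (Finset.univ.filter fun i => p i ω ≤ t).card

/-- Critical values `β_i = iα/(n+1-i(1-α))` (note `β_0 = 0`). -/
def beta (n : ℕ) (α : ℝ) (i : ℕ) : ℝ := i * α / (n + 1 - i * (1 - α))

/-- Step-down boundary: `max {crit i : p_{j:n} ≤ crit j for all j ≤ i}`, max ∅ := 0.
(`p_{j:n} ≤ c ↔ R(c) ≥ j`.) -/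
def tauSD {n : ℕ} (p : Fin n → Ω → ℝ) (crit : ℕ → ℝ) (ω : Ω) : ℝ :=
  if h : ((Finset.Icc 1 n).filter fun i =>
      ∀ j ∈ Finset.Icc 1 i, j ≤ Rc p (crit j) ω).Nonempty then
    (((Finset.Icc 1 n).filter fun i =>
      ∀ j ∈ Finset.Icc 1 i, j ≤ Rc p (crit j) ω)).sup' h crit
  else 0

/-- Step-up boundary: `max {crit i : p_{i:n} ≤ crit i}`, max ∅ := 0. -/
def tauSU {n : ℕ} (p : Fin n → Ω → ℝ) (crit : ℕ → ℝ) (ω : Ω) : ℝ :=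
  if h : ((Finset.Icc 1 n).filter fun i => i ≤ Rc p (crit i) ω).Nonempty then
    ((Finset.Icc 1 n).filter fun i => i ≤ Rc p (crit i) ω).sup' h crit
  else 0

/-- FDR estimator `\hat α_n(t)`. -/
def alphaHat {n : ℕ} (p : Fin n → Ω → ℝ) (t : ℝ) (ω : Ω) : ℝ :=
  (t / (1 - t)) * ((1 - (Rc p t ω : ℝ) / n) / ((Rc p t ω : ℝ) / n + 1 / n))

/-- `σ = min {crit i : p_{i:n} > crit i} ∧ crit n` (min ∅ := crit n). -/
def sigmaB {n : ℕ} (p : Fin n → Ω → ℝ) (crit : ℕ → ℝ) (ω : Ω) : ℝ :=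
  min (if h : ((Finset.Icc 1 n).filter fun i => Rc p (crit i) ω < i).Nonempty then
        ((Finset.Icc 1 n).filter fun i => Rc p (crit i) ω < i).inf' h crit
      else crit n) (crit n)

/-- The filtration `F_t^T`, `T = {0, β_1, ..., β_n}` indexed by `k ∈ {0,...,n}`. -/
def Ffilt {n : ℕ} (p : Fin n → Ω → ℝ) (B : ℕ → ℝ) (k : ℕ) : MeasurableSpace Ω :=
  MeasurableSpace.generateFrom {A | ∃ i : Fin n, ∃ j ≤ k, A = {ω | p i ω ≤ B j}}

/-- The martingale-type process `M_J(t) = ∑_{i∈J} (1(p_i ≤ t) - t)/(1-t)` at `t`. -/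
def Mval {n : ℕ} (p : Fin n → Ω → ℝ) (J : Finset (Fin n)) (t : ℝ) (ω : Ω) : ℝ :=
  ∑ i ∈ J, ((if p i ω ≤ t then (1 : ℝ) else 0) - t) / (1 - t)

-- ====== auxiliary lemmas ======

lemma count_antitone {P : ℕ → Prop} [DecidablePred P] {n : ℕ}
    (hP : ∀ i j, i ≤ j → P j → P i) {i : ℕ} (hi : i ∈ Icc 1 n) :
    P i ↔ i ≤ ((Icc 1 n).filter P).card := by
  simp only [mem_Icc] at hi
  constructor
  · intro h
    have hsub : Icc 1 i ⊆ (Icc 1 n).filter P := by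
      intro j hj
      simp only [mem_Icc] at hj
      simp only [mem_filter, mem_Icc]
      exact ⟨⟨hj.1, hj.2.trans hi.2⟩, hP j i hj.2 h⟩
    calc i = (Icc 1 i).card := by simp
    _ ≤ _ := card_le_card hsub
  · intro h
    by_contra hne
    have hsub : (Icc 1 n).filter P ⊆ Icc 1 (i - 1) := by
      intro j hj
      simp only [mem_filter, mem_Icc] at hj
      simp only [mem_Icc]
      refine ⟨hj.1.1, ?_⟩
      by_contra hc
      exact hne (hP i j (by omega) hj.2)
    have h2 := card_le_card hsub
    simp only [Nat.card_Icc] at h2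
    omega

lemma beta_denom_pos {n : ℕ} {α : ℝ} (hα : α ∈ Set.Ioo (0:ℝ) 1) {i : ℕ} (hi : i ≤ n) :
    0 < (n:ℝ) + 1 - i * (1 - α) := by
  have h1 : (i:ℝ) * (1 - α) ≤ n * (1 - α) :=
    mul_le_mul_of_nonneg_right (by exact_mod_cast hi) (by linarith [hα.2])
  nlinarith [hα.1, hα.2, mul_nonneg (Nat.cast_nonneg n : (0:ℝ) ≤ n) hα.1.le]

lemma beta_nonneg {n : ℕ} {α : ℝ} (hα : α ∈ Set.Ioo (0:ℝ) 1) {i : ℕ} (hi : i ≤ n) :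
    0 ≤ beta n α i :=
  div_nonneg (mul_nonneg (Nat.cast_nonneg i) hα.1.le) (beta_denom_pos hα hi).le

lemma beta_mono {n : ℕ} {α : ℝ} (hα : α ∈ Set.Ioo (0:ℝ) 1) {i j : ℕ}
    (hij : i ≤ j) (hj : j ≤ n) : beta n α i ≤ beta n α j := by
  have hdj := beta_denom_pos hα hj
  have hdi := beta_denom_pos hα (hij.trans hj)
  unfold beta
  apply div_le_div₀ (mul_nonneg (Nat.cast_nonneg j) hα.1.le)
    (mul_le_mul_of_nonneg_right (by exact_mod_cast hij) hα.1.le) hdj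
  have : (i:ℝ) ≤ j := by exact_mod_cast hij
  nlinarith [hα.2]

lemma one_sub_beta {n : ℕ} {α : ℝ} (hα : α ∈ Set.Ioo (0:ℝ) 1) {i : ℕ} (hi : i ≤ n) :
    1 - beta n α i = ((n:ℝ) + 1 - i) / ((n:ℝ) + 1 - i * (1 - α)) := by
  have hd := beta_denom_pos hα hi
  unfold beta; field_simp; ring

lemma one_sub_beta_pos {n : ℕ} {α : ℝ} (hα : α ∈ Set.Ioo (0:ℝ) 1) {i : ℕ} (hi : i ≤ n) :
    0 < 1 - beta n α i := by
  rw [one_sub_beta hα hi]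
  apply div_pos _ (beta_denom_pos hα hi)
  have : (i:ℝ) ≤ n := by exact_mod_cast hi
  linarith

lemma Rc_le_n {n : ℕ} (p : Fin n → Ω → ℝ) (ω : Ω) (t : ℝ) : Rc p t ω ≤ n := by
  have := Finset.card_filter_le (Finset.univ : Finset (Fin n)) (fun i => p i ω ≤ t)
  simpa [Rc] using this

lemma Rc_mono {n : ℕ} (p : Fin n → Ω → ℝ) (ω : Ω) {t t' : ℝ} (h : t ≤ t') :
    Rc p t ω ≤ Rc p t' ω := by
  apply Finset.card_le_card
  intro i hi
  simp only [Rc, Finset.mem_filter, Finset.mem_univ, true_and] at hi ⊢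
  exact hi.trans h

lemma Rc_eq_Vc_add {n : ℕ} (p : Fin n → Ω → ℝ) (ω : Ω) (I0 : Finset (Fin n))
    (hω : ∀ i, i ∉ I0 → p i ω = 0) {t : ℝ} (ht : 0 ≤ t) :
    Rc p t ω = Vc p I0 t ω + (n - I0.card) := by
  unfold Rc Vc
  have hu : (Finset.univ : Finset (Fin n)) = I0 ∪ I0ᶜ := by simp
  have h2 : I0ᶜ.filter (fun i => p i ω ≤ t) = I0ᶜ :=
    Finset.filter_true_of_mem (fun i hi => by
      rw [hω i (Finset.mem_compl.mp hi)]; exact ht)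
  rw [hu, Finset.filter_union, Finset.card_union_of_disjoint, h2, Finset.card_compl]
  · simp
  · exact disjoint_compl_right.mono (Finset.filter_subset _ _) (Finset.filter_subset _ _)

def Kcount {n : ℕ} (p : Fin n → Ω → ℝ) (B : ℕ → ℝ) (ω : Ω) : ℕ :=
  ((Finset.Icc 1 n).filter fun i => ∀ j ∈ Finset.Icc 1 i, j ≤ Rc p (B j) ω).card

lemma Kcount_le_n {n : ℕ} (p : Fin n → Ω → ℝ) (B : ℕ → ℝ) (ω : Ω) :
    Kcount p B ω ≤ n := by
  have := Finset.card_filter_le (Icc 1 n)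
    (fun i => ∀ j ∈ Finset.Icc 1 i, j ≤ Rc p (B j) ω)
  simpa [Kcount, Nat.card_Icc] using this


lemma core {n : ℕ} (p : Fin n → Ω → ℝ) (I0 : Finset (Fin n)) {α : ℝ}
    (hα : α ∈ Set.Ioo (0:ℝ) 1) (ω : Ω) (hω : ∀ i, i ∉ I0 → p i ω = 0) :
    (Vc p I0 (tauSD p (beta n α) ω) ω : ℝ)
        = (Kcount p (beta n α) ω : ℝ) - ((n - I0.card : ℕ) : ℝ)
    ∧ (Rc p (tauSD p (beta n α) ω) ω = n ↔ Kcount p (beta n α) ω = n)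
    ∧ Mval p I0 (sigmaB p (beta n α) ω) ω
        = (1 - α) * ((Kcount p (beta n α) ω : ℝ) - ((n - I0.card : ℕ) : ℝ))
          - α * (((n - I0.card : ℕ) : ℝ) + 1)
          + (if Kcount p (beta n α) ω = n then α * ((n:ℝ) + 1) else 0) := by
  set K := Kcount p (beta n α) ω with hKdef
  have hKcard : K = ((Icc 1 n).filter fun i =>
      ∀ j ∈ Icc 1 i, j ≤ Rc p (beta n α j) ω).card := rfl
  have hanti : ∀ i j, i ≤ j → (∀ m ∈ Icc 1 j, m ≤ Rc p (beta n α m) ω) →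
      (∀ m ∈ Icc 1 i, m ≤ Rc p (beta n α m) ω) := by
    intro i j hij hFj m hm
    simp only [mem_Icc] at hm
    exact hFj m (by simp only [mem_Icc]; omega)
  have hFiff : ∀ i ∈ Icc 1 n,
      ((∀ m ∈ Icc 1 i, m ≤ Rc p (beta n α m) ω) ↔ i ≤ K) := by
    intro i hi
    rw [hKcard]
    exact @count_antitone _ (fun _ => Classical.propDecidable _) n hanti i hi
  have hKn : K ≤ n := Kcount_le_n p (beta n α) ω
  have hFK : ∀ j ∈ Icc 1 K, j ≤ Rc p (beta n α j) ω := by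
    intro j hj
    simp only [mem_Icc] at hj
    have hFj := (hFiff j (by simp only [mem_Icc]; omega)).2 hj.2
    exact hFj j (by simp only [mem_Icc]; omega)
  have hRK_ge : K ≤ Rc p (beta n α K) ω := by
    rcases Nat.eq_zero_or_pos K with h0 | h0
    · omega
    · exact hFK K (by simp only [mem_Icc]; omega)
  have hfail : K < n → Rc p (beta n α (K+1)) ω < K + 1 := by
    intro hKlt
    by_contra hc
    push_neg at hc
    have hFK1 : ∀ m ∈ Icc 1 (K+1), m ≤ Rc p (beta n α m) ω := by
      intro j hj
      simp only [mem_Icc] at hj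
      rcases Nat.lt_or_ge j (K+1) with h | h
      · exact hFK j (by simp only [mem_Icc]; omega)
      · have hj1 : j = K + 1 := by omega
        subst hj1; exact hc
    have := (hFiff (K+1) (by simp only [mem_Icc]; omega)).1 hFK1
    omega
  have hRτ : Rc p (beta n α K) ω = K := by
    rcases Nat.lt_or_ge K n with h | h
    · have hmono : beta n α K ≤ beta n α (K+1) :=
        beta_mono hα (Nat.le_succ K) (by omega)
      have h1 := Rc_mono p ω hmono
      have h2 := hfail h
      omega
    · have := Rc_le_n p ω (beta n α K)
      omega
  have htau : tauSD p (beta n α) ω = beta n α K := by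
    unfold tauSD
    split_ifs with h
    · apply le_antisymm
      · apply Finset.sup'_le
        intro i hi
        simp only [Finset.mem_filter] at hi
        exact beta_mono hα ((hFiff i hi.1).1 hi.2) hKn
      · have hK1 : 1 ≤ K := by
          rw [hKcard]
          exact Finset.card_pos.mpr h
        refine Finset.le_sup' _ ?_
        simp only [Finset.mem_filter]
        exact ⟨by simp only [mem_Icc]; omega,
          (hFiff K (by simp only [mem_Icc]; omega)).2 le_rfl⟩
    · have hK0 : K = 0 := by
        rw [hKcard, Finset.not_nonempty_iff_eq_empty.mp h]
        simp
      rw [hK0]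
      simp [beta]
  have hsig : sigmaB p (beta n α) ω = beta n α (min (K+1) n) := by
    unfold sigmaB
    split_ifs with hne
    · have hKlt : K < n := by
        by_contra hc
        push_neg at hc
        have hKeq : K = n := le_antisymm hKn hc
        obtain ⟨i, hi⟩ := hne
        simp only [Finset.mem_filter, Finset.mem_Icc] at hi
        have := hFK i (by simp only [mem_Icc]; omega)
        omega
      rw [show min (K+1) n = K + 1 from by omega]
      have h1 : Finset.inf' _ hne (beta n α) = beta n α (K+1) := by
        apply le_antisymm
        · refine Finset.inf'_le _ ?_
          simp only [Finset.mem_filter, Finset.mem_Icc]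
          exact ⟨⟨by omega, by omega⟩, hfail hKlt⟩
        · apply Finset.le_inf'
          intro i hi
          simp only [Finset.mem_filter, Finset.mem_Icc] at hi
          have hKi : K + 1 ≤ i := by
            by_contra hc
            push_neg at hc
            have := hFK i (by simp only [mem_Icc]; omega)
            omega
          exact beta_mono hα hKi hi.1.2
      rw [h1]
      exact min_eq_left (beta_mono hα (show K + 1 ≤ n by omega) le_rfl)
    · have hKeq : K = n := by
        by_contra hc
        have hKlt : K < n := by omega
        refine hne ⟨K+1, ?_⟩
        simp only [Finset.mem_filter, Finset.mem_Icc]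
        exact ⟨⟨by omega, by omega⟩, hfail hKlt⟩
      rw [show min (K+1) n = n from by omega, min_self]
  have hcard : I0.card ≤ n := by simpa using Finset.card_le_univ I0
  have hRσ : Rc p (beta n α (min (K+1) n)) ω = K := by
    rcases Nat.lt_or_ge K n with h | h
    · rw [show min (K+1) n = K + 1 from by omega]
      have hmono : beta n α K ≤ beta n α (K+1) :=
        beta_mono hα (Nat.le_succ K) (by omega)
      have h1 := Rc_mono p ω hmono
      have h2 := hfail h
      omega
    · have hKeq : K = n := le_antisymm hKn h
      rw [show min (K+1) n = n from by omega]
      have h3 := hRτ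
      rw [hKeq] at h3
      omega
  have hVt : Vc p I0 (beta n α K) ω + (n - I0.card) = K := by
    have := Rc_eq_Vc_add p ω I0 hω (t := beta n α K) (beta_nonneg hα hKn)
    omega
  have hVs : Vc p I0 (beta n α (min (K+1) n)) ω + (n - I0.card) = K := by
    have := Rc_eq_Vc_add p ω I0 hω (t := beta n α (min (K+1) n))
      (beta_nonneg hα (min_le_right (K+1) n))
    omega
  refine ⟨?_, ?_, ?_⟩
  · rw [htau]
    have := congrArg (Nat.cast : ℕ → ℝ) hVt
    push_cast at this
    linarith
  · rw [htau, hRτ]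
  · rw [hsig]
    have hLn : min (K+1) n ≤ n := min_le_right _ _
    have h1s : 0 < 1 - beta n α (min (K+1) n) := one_sub_beta_pos hα hLn
    have hMform : Mval p I0 (beta n α (min (K+1) n)) ω
        = ((Vc p I0 (beta n α (min (K+1) n)) ω : ℝ) - I0.card * beta n α (min (K+1) n))
          / (1 - beta n α (min (K+1) n)) := by
      unfold Mval Vc
      rw [← Finset.sum_div]
      congr 1
      rw [Finset.sum_sub_distrib, Finset.sum_const, nsmul_eq_mul, Finset.sum_boole]
    have hVcast : (Vc p I0 (beta n α (min (K+1) n)) ω : ℝ)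
        = (K : ℝ) - ((n - I0.card : ℕ) : ℝ) := by
      have := congrArg (Nat.cast : ℕ → ℝ) hVs
      push_cast at this
      linarith
    have hn1cast : ((n - I0.card : ℕ) : ℝ) = (n : ℝ) - (I0.card : ℝ) := by
      push_cast [hcard]
      ring
    rw [hMform, hVcast]
    rcases Nat.lt_or_ge K n with h | h
    · rw [if_neg (by omega)]
      have hLK : min (K+1) n = K + 1 := by omega
      have hD : (0:ℝ) < (n:ℝ) + 1 - ((K:ℝ) + 1) * (1 - α) := by
        have := beta_denom_pos (n := n) hα (i := K + 1) (by omega)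
        push_cast at this
        convert this using 2
      have hsval : beta n α (min (K+1) n)
          = ((K:ℝ) + 1) * α / ((n:ℝ) + 1 - ((K:ℝ) + 1) * (1 - α)) := by
        rw [hLK]
        unfold beta
        push_cast
        ring_nf
      have h1sval : 1 - beta n α (min (K+1) n)
          = ((n:ℝ) - K) / ((n:ℝ) + 1 - ((K:ℝ) + 1) * (1 - α)) := by
        rw [hLK, one_sub_beta hα (show K + 1 ≤ n by omega)]
        push_cast
        ring_nf
      have hnK : (0:ℝ) < (n:ℝ) - K := by
        have : (K:ℝ) < n := by exact_mod_cast h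
        linarith
      rw [div_eq_iff (ne_of_gt h1s), hn1cast, h1sval, hsval]
      field_simp
      ring
    · have hKeq : K = n := le_antisymm hKn h
      rw [if_pos hKeq]
      have heq : ((K:ℝ) - ((n - I0.card : ℕ) : ℝ)) = (I0.card : ℝ) := by
        rw [hn1cast, hKeq]
        ring
      rw [heq]
      have hlhs : ((I0.card : ℝ) - I0.card * beta n α (min (K+1) n))
          / (1 - beta n α (min (K+1) n)) = I0.card := by
        rw [show (I0.card : ℝ) - I0.card * beta n α (min (K+1) n)
            = I0.card * (1 - beta n α (min (K+1) n)) by ring,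
          mul_div_assoc, div_self (ne_of_gt h1s), mul_one]
      rw [hlhs, hn1cast]
      ring

lemma measurable_Rc {n : ℕ} [MeasurableSpace Ω] (p : Fin n → Ω → ℝ)
    (hpm : ∀ i, Measurable (p i)) (t : ℝ) : Measurable fun ω => Rc p t ω := by
  have h : (fun ω => Rc p t ω) = fun ω => ∑ i : Fin n, if p i ω ≤ t then 1 else 0 := by
    funext ω
    unfold Rc
    rw [Finset.card_filter]
  rw [h]
  exact Finset.measurable_sum _ (fun i _ =>
    Measurable.ite (measurableSet_le (hpm i) measurable_const)
      measurable_const measurable_const)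

lemma measurable_Kcount {n : ℕ} [MeasurableSpace Ω] (p : Fin n → Ω → ℝ)
    (hpm : ∀ i, Measurable (p i)) (B : ℕ → ℝ) :
    Measurable fun ω => Kcount p B ω := by
  have h : (fun ω => Kcount p B ω)
      = fun ω => ∑ i ∈ Icc 1 n, if (∀ j ∈ Icc 1 i, j ≤ Rc p (B j) ω) then 1 else 0 := by
    funext ω
    unfold Kcount
    rw [Finset.card_filter]
  rw [h]
  apply Finset.measurable_sum
  intro i _
  apply Measurable.ite _ measurable_const measurable_const
  have h2 : {ω : Ω | ∀ j ∈ Icc 1 i, j ≤ Rc p (B j) ω}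
      = ⋂ j ∈ (Icc 1 i : Finset ℕ), {ω : Ω | j ≤ Rc p (B j) ω} := by
    ext ω
    simp
  rw [h2]
  apply MeasurableSet.biInter (Set.to_countable _)
  intro j _
  exact measurable_Rc p hpm (B j) (MeasurableSet.of_discrete (s := {k : ℕ | j ≤ k}))


/-- under Dirac configuration on `I_1`, the ENFR bound
`E[V(τ_SD)] ≤ (α/(1-α))(n_1+1)` holds iff `E[M_{I_0}(σ)] ≤ α(n+1)P(R(τ_SD)=n)`. -/
theorem enfr_iff_martingale_bound {n : ℕ} [MeasurableSpace Ω] (μ : Measure Ω)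
    [IsProbabilityMeasure μ] (p : Fin n → Ω → ℝ) (I0 : Finset (Fin n)) (α : ℝ)
    (hn : 1 ≤ n) (hα : α ∈ Set.Ioo (0 : ℝ) 1) (hI0 : I0.Nonempty)
    (hp01 : ∀ i ω, p i ω ∈ Set.Icc (0 : ℝ) 1) (hpm : ∀ i, Measurable (p i))
    (hdirac : ∀ᵐ ω ∂μ, ∀ i ∈ I0ᶜ, p i ω = 0) :
    (∫ ω, (Vc p I0 (tauSD p (beta n α) ω) ω : ℝ) ∂μ
        ≤ α / (1 - α) * (((n - I0.card : ℕ) : ℝ) + 1))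
    ↔ (∫ ω, Mval p I0 (sigmaB p (beta n α) ω) ω ∂μ
        ≤ α * (n + 1) * (μ {ω | Rc p (tauSD p (beta n α) ω) ω = n}).toReal) := by
  have hdirac' : ∀ᵐ ω ∂μ, ∀ i, i ∉ I0 → p i ω = 0 :=
    hdirac.mono (fun ω h i hi => h i (Finset.mem_compl.mpr hi))
  have hKmeas : Measurable fun ω => Kcount p (beta n α) ω :=
    measurable_Kcount p hpm (beta n α)
  have hKr : Measurable fun ω => ((Kcount p (beta n α) ω : ℝ)) :=
    measurable_from_top.comp hKmeas
  have hKle : ∀ ω, Kcount p (beta n α) ω ≤ n := fun ω => Kcount_le_n p (beta n α) ω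
  have hKint : Integrable (fun ω => ((Kcount p (beta n α) ω : ℝ))) μ := by
    apply Integrable.mono' (integrable_const (n : ℝ)) hKr.aestronglyMeasurable
    filter_upwards with ω
    rw [Real.norm_eq_abs, abs_of_nonneg (Nat.cast_nonneg _)]
    exact_mod_cast hKle ω
  have hAmeas : MeasurableSet {ω | Kcount p (beta n α) ω = n} :=
    hKmeas (MeasurableSet.of_discrete (s := {k : ℕ | k = n}))
  -- integral of V
  have hVint : ∫ ω, (Vc p I0 (tauSD p (beta n α) ω) ω : ℝ) ∂μ
      = (∫ ω, ((Kcount p (beta n α) ω : ℝ)) ∂μ) - ((n - I0.card : ℕ) : ℝ) := by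
    have h1 : ∫ ω, (Vc p I0 (tauSD p (beta n α) ω) ω : ℝ) ∂μ
        = ∫ ω, (((Kcount p (beta n α) ω : ℝ)) - ((n - I0.card : ℕ) : ℝ)) ∂μ :=
      integral_congr_ae (hdirac'.mono fun ω hω => (core p I0 hα ω hω).1)
    rw [h1, integral_sub hKint (integrable_const _), integral_const]
    simp
  have hμeq : μ {ω | Rc p (tauSD p (beta n α) ω) ω = n}
      = μ {ω | Kcount p (beta n α) ω = n} := by
    apply measure_congr
    rw [Filter.eventuallyEq_set]
    exact hdirac'.mono fun ω hω => by simpa using (core p I0 hα ω hω).2.1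
  have hMint : ∫ ω, Mval p I0 (sigmaB p (beta n α) ω) ω ∂μ
      = (1 - α) * ((∫ ω, ((Kcount p (beta n α) ω : ℝ)) ∂μ) - ((n - I0.card : ℕ) : ℝ))
        - α * (((n - I0.card : ℕ) : ℝ) + 1)
        + α * ((n : ℝ) + 1) * (μ {ω | Kcount p (beta n α) ω = n}).toReal := by
    have h1 : ∫ ω, Mval p I0 (sigmaB p (beta n α) ω) ω ∂μ
        = ∫ ω, ((1 - α) * (((Kcount p (beta n α) ω : ℝ)) - ((n - I0.card : ℕ) : ℝ))
            - α * (((n - I0.card : ℕ) : ℝ) + 1)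
            + (if Kcount p (beta n α) ω = n then α * ((n:ℝ) + 1) else 0)) ∂μ :=
      integral_congr_ae (hdirac'.mono fun ω hω => (core p I0 hα ω hω).2.2)
    rw [h1]
    have hind : (fun ω => if Kcount p (beta n α) ω = n then α * ((n:ℝ) + 1) else 0)
        = Set.indicator {ω | Kcount p (beta n α) ω = n} (fun _ => α * ((n:ℝ) + 1)) := by
      funext ω
      by_cases h : Kcount p (beta n α) ω = n <;> simp [Set.indicator, h]
    have hint1 : Integrable (fun ω =>
        (1 - α) * (((Kcount p (beta n α) ω : ℝ)) - ((n - I0.card : ℕ) : ℝ))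
          - α * (((n - I0.card : ℕ) : ℝ) + 1)) μ :=
      ((hKint.sub (integrable_const _)).const_mul _).sub (integrable_const _)
    have hint2 : Integrable (fun ω =>
        if Kcount p (beta n α) ω = n then α * ((n:ℝ) + 1) else 0) μ := by
      rw [hind]
      exact (integrable_const _).indicator hAmeas
    have e1 : ∫ ω, ((1 - α) * (((Kcount p (beta n α) ω : ℝ)) - ((n - I0.card : ℕ) : ℝ))
          - α * (((n - I0.card : ℕ) : ℝ) + 1)) ∂μ
        = (1 - α) * ((∫ ω, ((Kcount p (beta n α) ω : ℝ)) ∂μ) - ((n - I0.card : ℕ) : ℝ))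
          - α * (((n - I0.card : ℕ) : ℝ) + 1) := by
      have hfe : (fun ω => (1 - α) * (((Kcount p (beta n α) ω : ℝ)) - ((n - I0.card : ℕ) : ℝ))
            - α * (((n - I0.card : ℕ) : ℝ) + 1))
          = fun ω => (1 - α) * ((Kcount p (beta n α) ω : ℝ))
            - ((1 - α) * ((n - I0.card : ℕ) : ℝ) + α * (((n - I0.card : ℕ) : ℝ) + 1)) := by
        funext ω
        ring
      rw [hfe, integral_sub (hKint.const_mul _) (integrable_const _), integral_const_mul,
        integral_const]
      simp
      ring
    have e2 : ∫ ω, (if Kcount p (beta n α) ω = n then α * ((n:ℝ) + 1) else 0) ∂μ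
        = α * ((n : ℝ) + 1) * (μ {ω | Kcount p (beta n α) ω = n}).toReal := by
      rw [hind, integral_indicator_const _ hAmeas, smul_eq_mul]
      simp only [measureReal_def]
      ring
    rw [integral_add hint1 hint2, e1, e2]
  rw [hVint, hMint, hμeq]
  have h1α : 0 < 1 - α := by
    have := hα.2
    linarith
  constructor
  · intro h
    rw [div_mul_eq_mul_div, le_div_iff₀ h1α] at h
    nlinarith
  · intro h
    rw [div_mul_eq_mul_div, le_div_iff₀ h1α]
    nlinarith

end
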